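/- Let C₀ ≠ 0. If H is a C² solution of H'' − C₀H' + H² + (6C₀²/25)H = 0 on an interval, then the quantity (H' − (2C₀/5)H)² + (2/3)H³ equals C₂·exp((6C₀/5)θ) for some constant C₂; i.e., the derivative of exp(−(6C₀/5)θ)·((H' − (2C₀/5)H)² + (2/3)H³) vanishes identically. -/

import Mathlib

open Real Set

/-- First integral of the integrable Liénard equation: if `H` is a `C²` solution of
`H'' − C₀H' + H² + (6C₀²/25)H = 0` on an interval, then
`exp(−(6C₀/5)θ)((H' − (2C₀/5)H)² + (2/3)H³)` has vanishing derivative there, so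
`(H' − (2C₀/5)H)² + (2/3)H³ = C₂ exp((6C₀/5)θ)` for some constant `C₂`. -/
theorem stmt19 (C₀ a b : ℝ) (h0 : C₀ ≠ 0) (hab : a < b) (H : ℝ → ℝ)
    (hH : ContDiffOn ℝ 2 H (Ioo a b))
    (hode : ∀ θ ∈ Ioo a b,
      deriv (deriv H) θ - C₀ * deriv H θ + (H θ) ^ 2 + (6 * C₀ ^ 2 / 25) * H θ = 0) :
    (∀ θ ∈ Ioo a b,
      deriv (fun t => Real.exp (-(6 * C₀ / 5) * t) *
        ((deriv H t - (2 * C₀ / 5) * H t) ^ 2 + (2 / 3) * (H t) ^ 3)) θ = 0) ∧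
    ∃ C₂ : ℝ, ∀ θ ∈ Ioo a b,
      (deriv H θ - (2 * C₀ / 5) * H θ) ^ 2 + (2 / 3) * (H θ) ^ 3 =
        C₂ * Real.exp ((6 * C₀ / 5) * θ) := by
  set φ : ℝ → ℝ := fun t => Real.exp (-(6 * C₀ / 5) * t) *
    ((deriv H t - (2 * C₀ / 5) * H t) ^ 2 + (2 / 3) * (H t) ^ 3) with hφdef
  have hopen : IsOpen (Ioo a b) := isOpen_Ioo
  have hH' : ContDiffOn ℝ 1 (deriv H) (Ioo a b) :=
    hH.deriv_of_isOpen hopen (by norm_num)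
  have hkey : ∀ θ ∈ Ioo a b, HasDerivAt φ 0 θ := by
    intro θ hθ
    have hH1 : HasDerivAt H (deriv H θ) θ :=
      ((hH.differentiableOn (by norm_num)).differentiableAt
        (hopen.mem_nhds hθ)).hasDerivAt
    have hH2 : HasDerivAt (deriv H) (deriv (deriv H) θ) θ :=
      ((hH'.differentiableOn (by norm_num)).differentiableAt
        (hopen.mem_nhds hθ)).hasDerivAt
    have hE : HasDerivAt (fun t => Real.exp (-(6 * C₀ / 5) * t))
        (-(6 * C₀ / 5) * Real.exp (-(6 * C₀ / 5) * θ)) θ := by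
      have h := HasDerivAt.exp ((hasDerivAt_id θ).const_mul (-(6 * C₀ / 5)))
      simp only [id_eq] at h
      convert h using 1
      ring
    have hG : HasDerivAt (fun t => (deriv H t - (2 * C₀ / 5) * H t) ^ 2 + (2 / 3) * (H t) ^ 3)
        (2 * (deriv H θ - (2 * C₀ / 5) * H θ) * (deriv (deriv H) θ - (2 * C₀ / 5) * deriv H θ)
          + 2 * (H θ) ^ 2 * deriv H θ) θ := by
      have h1 := ((hH2.sub (hH1.const_mul (2 * C₀ / 5))).pow 2)
      have h2 := (hH1.pow 3).const_mul (2 / 3)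
      refine (h1.add h2).congr_deriv ?_
      simp only [Pi.sub_apply]
      ring
    have hsub : deriv (deriv H) θ = C₀ * deriv H θ - (H θ) ^ 2 - (6 * C₀ ^ 2 / 25) * H θ := by
      have := hode θ hθ; linarith
    have := hE.mul hG
    refine this.congr_deriv ?_
    rw [hsub]; ring
  constructor
  · intro θ hθ
    exact (hkey θ hθ).deriv
  · set m : ℝ := (a + b) / 2 with hm
    have hmmem : m ∈ Ioo a b := ⟨by simp [hm]; linarith, by simp [hm]; linarith⟩
    have hconst : ∀ θ ∈ Ioo a b, φ θ = φ m := by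
      intro θ hθ
      apply (convex_Ioo a b).is_const_of_fderivWithin_eq_zero (f := φ)
        (fun x hx => ((hkey x hx).differentiableAt).differentiableWithinAt)
        ?_ hθ hmmem
      intro x hx
      have : fderiv ℝ φ x = (1 : ℝ →L[ℝ] ℝ).smulRight (0 : ℝ) :=
        ((hkey x hx).hasFDerivAt).fderiv
      rw [fderivWithin_of_isOpen hopen hx, this]
      ext
      simp
    refine ⟨Real.exp (-(6 * C₀ / 5) * m) *
      ((deriv H m - (2 * C₀ / 5) * H m) ^ 2 + (2 / 3) * (H m) ^ 3), ?_⟩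
    intro θ hθ
    have h1 := hconst θ hθ
    have hne : Real.exp (-(6 * C₀ / 5) * θ) ≠ 0 := Real.exp_ne_zero _
    have : (deriv H θ - (2 * C₀ / 5) * H θ) ^ 2 + (2 / 3) * (H θ) ^ 3 =
        φ m * Real.exp ((6 * C₀ / 5) * θ) := by
      have h2 : φ θ * Real.exp ((6 * C₀ / 5) * θ) = φ m * Real.exp ((6 * C₀ / 5) * θ) := by
        rw [h1]
      calc (deriv H θ - (2 * C₀ / 5) * H θ) ^ 2 + (2 / 3) * (H θ) ^ 3
          = φ θ * Real.exp ((6 * C₀ / 5) * θ) := by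
            simp only [hφdef]
            rw [mul_right_comm, ← Real.exp_add]
            simp
        _ = φ m * Real.exp ((6 * C₀ / 5) * θ) := h2
    simpa [hφdef] using this
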